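/- Let X ∈ ℝ^{n×d}, y ∈ ℝ^n, A = [X y] ∈ ℝ^{n×(d+1)}, and let η ∈ ℝ^{p×(d+1)} be any matrix. Let = [A; η] ∈ ℝ^{(n+p)×(d+1)}, let S ∈ ℝ^{r×(n+p)}, and suppose there exist constants 0 < c₀ ≤ C₀ such that c₀‖Âv‖₁ ≤ ‖SÂv‖₁ ≤ C₀‖Âv‖₁ for every v ∈ ℝ^{d+1}. If β ∈ ℝ^d minimizes the sketched ℓ₁ objective β̃ ↦ ‖SÂβ̃₋₁‖₁, where β̃₋₁ = (β̃, −1), then for every β̃ ∈ ℝ^d: (i) ‖SÂβ₋₁‖₁ ≤ C₀·(‖Xβ̃ − y‖₁ + ‖ηβ̃₋₁‖₁), and (ii) ‖Xβ − y‖₁ + ‖ηβ₋₁‖₁ ≤ (C₀/c₀)·(‖Xβ̃ − y‖₁ + ‖ηβ̃₋₁‖₁). That is, solving the ℓ₁ regression problem on the sketch SÂ is equivalent to approximately solving the regularized ℓ₁ regression problem β̃ ↦ ‖Xβ̃ − y‖₁ + ‖ηβ̃₋₁‖₁. -/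

import Mathlib

open Matrix BigOperators

/-- `ℓ₁` norm of a vector. -/
def l1Norm {ι : Type*} [Fintype ι] (v : ι → ℝ) : ℝ := ∑ i, |v i|

/-- Solving `ℓ₁` regression on a sketch of the noise-augmented matrix `Â = [A; η]`
(where `A = [X y]`) approximately minimizes the regularized objective
`β̃ ↦ ‖X β̃ − y‖₁ + ‖η β̃₋₁‖₁`, provided `c₀‖Â v‖₁ ≤ ‖S Â v‖₁ ≤ C₀‖Â v‖₁` for all `v`. -/
theorem stmt16 {n d p r : ℕ} (X : Matrix (Fin n) (Fin d) ℝ) (y : Fin n → ℝ)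
    (A : Matrix (Fin n) (Fin d ⊕ Unit) ℝ)
    (hA : A = fun i => Sum.elim (X i) (fun _ => y i))
    (η : Matrix (Fin p) (Fin d ⊕ Unit) ℝ)
    (Ahat : Matrix (Fin n ⊕ Fin p) (Fin d ⊕ Unit) ℝ)
    (hAhat : Ahat = Matrix.fromRows A η)
    (S : Matrix (Fin r) (Fin n ⊕ Fin p) ℝ)
    (c₀ C₀ : ℝ) (hc₀ : 0 < c₀) (hc₀C₀ : c₀ ≤ C₀)
    (hembed : ∀ v : Fin d ⊕ Unit → ℝ,
      c₀ * l1Norm (Ahat.mulVec v) ≤ l1Norm ((S * Ahat).mulVec v) ∧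
      l1Norm ((S * Ahat).mulVec v) ≤ C₀ * l1Norm (Ahat.mulVec v))
    (β : Fin d → ℝ)
    (hmin : ∀ βt : Fin d → ℝ,
      l1Norm ((S * Ahat).mulVec (Sum.elim β fun _ => -1)) ≤
        l1Norm ((S * Ahat).mulVec (Sum.elim βt fun _ => -1))) :
    (∀ βt : Fin d → ℝ,
      l1Norm ((S * Ahat).mulVec (Sum.elim β fun _ => -1)) ≤
        C₀ * (l1Norm (X.mulVec βt - y) + l1Norm (η.mulVec (Sum.elim βt fun _ => -1)))) ∧
    (∀ βt : Fin d → ℝ,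
      l1Norm (X.mulVec β - y) + l1Norm (η.mulVec (Sum.elim β fun _ => -1)) ≤
        (C₀ / c₀) *
          (l1Norm (X.mulVec βt - y) + l1Norm (η.mulVec (Sum.elim βt fun _ => -1)))) := by
  subst hA hAhat
  have key : ∀ βt : Fin d → ℝ,
      l1Norm ((Matrix.fromRows (fun i => Sum.elim (X i) (fun _ => y i)) η).mulVec
        (Sum.elim βt fun _ => -1)) =
      l1Norm (X.mulVec βt - y) + l1Norm (η.mulVec (Sum.elim βt fun _ => -1)) := by
    intro βt
    simp only [l1Norm, Fintype.sum_sum_type]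
    congr 1
    · apply Finset.sum_congr rfl
      intro i _
      congr 1
      simp [Matrix.fromRows_apply_inl, Matrix.mulVec, dotProduct, Fintype.sum_sum_type,
        mul_comm]
      exact congrArg₂ _ (Finset.sum_congr rfl fun x _ => mul_comm _ _) rfl
  constructor
  · intro βt
    calc l1Norm ((S * Matrix.fromRows (fun i => Sum.elim (X i) fun _ => y i) η).mulVec
          (Sum.elim β fun _ => -1))
        ≤ l1Norm ((S * Matrix.fromRows (fun i => Sum.elim (X i) fun _ => y i) η).mulVec
          (Sum.elim βt fun _ => -1)) := hmin βt
      _ ≤ C₀ * l1Norm ((Matrix.fromRows (fun i => Sum.elim (X i) fun _ => y i) η).mulVec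
          (Sum.elim βt fun _ => -1)) := (hembed _).2
      _ = _ := by rw [key]
  · intro βt
    have h1 := (hembed (Sum.elim β fun _ => -1)).1
    rw [key] at h1
    have h2 : l1Norm ((S * Matrix.fromRows (fun i => Sum.elim (X i) fun _ => y i) η).mulVec
        (Sum.elim β fun _ => -1)) ≤
        C₀ * (l1Norm (X.mulVec βt - y) + l1Norm (η.mulVec (Sum.elim βt fun _ => -1))) := by
      calc _ ≤ l1Norm ((S * Matrix.fromRows (fun i => Sum.elim (X i) fun _ => y i) η).mulVec
          (Sum.elim βt fun _ => -1)) := hmin βt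
        _ ≤ C₀ * l1Norm ((Matrix.fromRows (fun i => Sum.elim (X i) fun _ => y i) η).mulVec
          (Sum.elim βt fun _ => -1)) := (hembed _).2
        _ = _ := by rw [key]
    rw [div_mul_eq_mul_div, le_div_iff₀ hc₀, mul_comm]
    linarith
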